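/- arXiv:1810.10229 — 4 statements merged into one kernel-verified Lean document; each statement's English description precedes it below -/
import Mathlib

section
/- Let G be a connected finite simple graph with nonnegative edge weights w, let S ⊆ V be nonempty, let v be a vertex, and let C be a cycle of G passing through v with w(C) < 2 · dist_G(v, S). Then every vertex of C lies in the ball B_S(v) = { u ∈ V : dist_G(v, u) < dist_G(v, S) }. -/
/-- The weight of a walk: the sum of the weights of its edges (with multiplicity). -/
noncomputable def walkWeight {V : Type*} {G : SimpleGraph V} (w : Sym2 V → ℝ) {u v : V}
    (p : G.Walk u v) : ℝ := (p.edges.map w).sum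

/-- The weighted distance between two vertices: the infimum of the weights of paths
between them. -/
noncomputable def gdist {V : Type*} (G : SimpleGraph V) (w : Sym2 V → ℝ) (u v : V) : ℝ :=
  sInf {x : ℝ | ∃ p : G.Walk u v, p.IsPath ∧ walkWeight w p = x}

/-- The weighted distance from a vertex to a set of vertices. -/
noncomputable def gdistS {V : Type*} (G : SimpleGraph V) (w : Sym2 V → ℝ) (v : V)
    (S : Set V) : ℝ :=
  sInf {x : ℝ | ∃ s ∈ S, gdist G w v s = x}

lemma walkWeight_nonneg {V : Type*} {G : SimpleGraph V} (w : Sym2 V → ℝ)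
    (hw : ∀ e ∈ G.edgeSet, 0 ≤ w e) {u v : V} (p : G.Walk u v) : 0 ≤ walkWeight w p := by
  apply List.sum_nonneg
  intro x hx
  simp only [List.mem_map] at hx
  obtain ⟨e, he, rfl⟩ := hx
  exact hw e (p.edges_subset_edgeSet he)

lemma walkWeight_bypass_le {V : Type*} [DecidableEq V] {G : SimpleGraph V} (w : Sym2 V → ℝ)
    (hw : ∀ e ∈ G.edgeSet, 0 ≤ w e) {u v : V} (p : G.Walk u v) :
    walkWeight w p.bypass ≤ walkWeight w p := by
  have hsub : List.Subperm p.bypass.edges p.edges :=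
    (p.bypass_isPath.edges_nodup).subperm p.edges_bypass_subset
  have : (p.bypass.edges.map w : Multiset ℝ) ≤ (p.edges.map w : Multiset ℝ) := by
    exact Multiset.map_le_map ((Multiset.coe_le.mpr hsub))
  obtain ⟨d, hd⟩ := Multiset.le_iff_exists_add.mp this
  have hd0 : (0:ℝ) ≤ d.sum := by
    apply Multiset.sum_nonneg
    intro x hx
    have hxmem : x ∈ (p.edges.map w : Multiset ℝ) := by rw [hd]; simp [hx]
    simp only [Multiset.mem_coe, List.mem_map] at hxmem
    obtain ⟨e, he, rfl⟩ := hxmem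
    exact hw e (p.edges_subset_edgeSet he)
  have := congrArg Multiset.sum hd
  simp only [Multiset.sum_add] at this
  unfold walkWeight
  have h1 : (p.bypass.edges.map w).sum = ((p.bypass.edges.map w : Multiset ℝ)).sum := rfl
  have h2 : (p.edges.map w).sum = ((p.edges.map w : Multiset ℝ)).sum := rfl
  rw [h1, h2, this]
  linarith

lemma walkWeight_append {V : Type*} {G : SimpleGraph V} (w : Sym2 V → ℝ) {u v x : V}
    (p : G.Walk u v) (q : G.Walk v x) :
    walkWeight w (p.append q) = walkWeight w p + walkWeight w q := by
  unfold walkWeight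
  rw [SimpleGraph.Walk.edges_append, List.map_append, List.sum_append]

lemma walkWeight_reverse {V : Type*} {G : SimpleGraph V} (w : Sym2 V → ℝ) {u v : V}
    (p : G.Walk u v) : walkWeight w p.reverse = walkWeight w p := by
  unfold walkWeight
  rw [SimpleGraph.Walk.edges_reverse, List.map_reverse, List.sum_reverse]

lemma gdist_bddBelow {V : Type*} (G : SimpleGraph V) (w : Sym2 V → ℝ)
    (hw : ∀ e ∈ G.edgeSet, 0 ≤ w e) (u v : V) :
    BddBelow {x : ℝ | ∃ p : G.Walk u v, p.IsPath ∧ walkWeight w p = x} := by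
  refine ⟨0, ?_⟩
  rintro x ⟨p, _, rfl⟩
  exact walkWeight_nonneg w hw p

lemma gdist_le_walkWeight {V : Type*} [DecidableEq V] {G : SimpleGraph V} (w : Sym2 V → ℝ)
    (hw : ∀ e ∈ G.edgeSet, 0 ≤ w e) {u v : V} (p : G.Walk u v) :
    gdist G w u v ≤ walkWeight w p := by
  refine le_trans (csInf_le (gdist_bddBelow G w hw u v) ⟨p.bypass, p.bypass_isPath, rfl⟩) ?_
  exact walkWeight_bypass_le w hw p

/-- In a connected finite simple graph with nonnegative edge weights, if a cycle `C` passes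
through `v` and `w(C) < 2 · dist_G(v, S)` for a nonempty set `S` of vertices, then every
vertex of `C` lies in the open ball `B_S(v) = { u : dist_G(v, u) < dist_G(v, S) }`. -/
theorem stmt4 {V : Type*} [Fintype V] (G : SimpleGraph V) (hG : G.Connected)
    (w : Sym2 V → ℝ) (hw : ∀ e ∈ G.edgeSet, 0 ≤ w e)
    (S : Set V) (hS : S.Nonempty) (v : V)
    (C : G.Walk v v) (hC : C.IsCycle)
    (hlt : walkWeight w C < 2 * gdistS G w v S) :
    ∀ u ∈ C.support, gdist G w v u < gdistS G w v S := by
  classical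
  intro u hu
  have hsum : walkWeight w (C.takeUntil u hu) + walkWeight w (C.dropUntil u hu)
      = walkWeight w C := by
    rw [← walkWeight_append, C.take_spec hu]
  have h1 : gdist G w v u ≤ walkWeight w (C.takeUntil u hu) :=
    gdist_le_walkWeight w hw _
  have h2 : gdist G w v u ≤ walkWeight w (C.dropUntil u hu) := by
    have := gdist_le_walkWeight w hw (C.dropUntil u hu).reverse
    rwa [walkWeight_reverse] at this
  linarith
end

section
/- Let G = (V, E) be a finite simple graph with nonnegative edge weights w, let E₀ = { e ∈ E : w_e = 0 }, and suppose the spanning subgraph (V, E₀) is a forest. Let A and B be two distinct connected components of (V, E₀), and let e and e' be two distinct edges of G, each having one endpoint in A and the other endpoint in B. Then G contains a cycle of weight exactly w_e + w_{e'}. -/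
/-- Auxiliary construction: given a subgraph `H ≤ G` whose edges all have weight `0`,
two `G`-edges `s(a,b) ≠ s(a',b')` of nonzero weight with `a', a` connected in `H`,
`b, b'` connected in `H`, but `a'` not `H`-connected to `b`, we produce a cycle of `G`
of weight `w s(a,b) + w s(a',b')`. -/
theorem stmt11_aux {V : Type*} {G H : SimpleGraph V} {w : Sym2 V → ℝ} (hle : H ≤ G)
    (hHw : ∀ e ∈ H.edgeSet, w e = 0)
    {a b a' b' : V} (hab : G.Adj a b) (hab' : G.Adj a' b')
    (hra : H.Reachable a' a) (hrb : H.Reachable b b')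
    (hsep : ¬ H.Reachable a' b)
    (hwab' : w s(a', b') ≠ 0)
    (hne : s(a, b) ≠ s(a', b')) :
    ∃ (x : V) (C : G.Walk x x), C.IsCycle ∧
      walkWeight w C = w s(a, b) + w s(a', b') := by
  classical
  obtain ⟨p0⟩ := hra
  obtain ⟨q0⟩ := hrb
  set p : H.Walk a' a := p0.toPath.1 with hpdef
  have hp : p.IsPath := p0.toPath.2
  set q : H.Walk b b' := q0.toPath.1 with hqdef
  have hq : q.IsPath := q0.toPath.2
  have hpA : ∀ x ∈ p.support, H.Reachable a' x := fun x hx => ⟨p.takeUntil x hx⟩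
  have hqB : ∀ x ∈ q.support, H.Reachable b x := fun x hx => ⟨q.takeUntil x hx⟩
  have hpe : ∀ e ∈ p.edges, e ∈ G.edgeSet := fun e he =>
    SimpleGraph.edgeSet_mono hle (p.edges_subset_edgeSet he)
  have hqe : ∀ e ∈ q.edges, e ∈ G.edgeSet := fun e he =>
    SimpleGraph.edgeSet_mono hle (q.edges_subset_edgeSet he)
  have hpw : ∀ e ∈ p.edges, w e = 0 := fun e he => hHw e (p.edges_subset_edgeSet he)
  have hqw : ∀ e ∈ q.edges, w e = 0 := fun e he => hHw e (q.edges_subset_edgeSet he)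
  set p' : G.Walk a' a := p.transfer G hpe with hp'def
  set q' : G.Walk b b' := q.transfer G hqe with hq'def
  set P : G.Walk b' a' :=
    q'.reverse.append (SimpleGraph.Walk.cons hab.symm p'.reverse) with hPdef
  have hedges : P.edges = q.edges.reverse ++ (s(b, a) :: p.edges.reverse) := by
    rw [hPdef, SimpleGraph.Walk.edges_append, SimpleGraph.Walk.edges_reverse,
      hq'def, SimpleGraph.Walk.edges_transfer]
    simp [SimpleGraph.Walk.edges_reverse, hp'def, SimpleGraph.Walk.edges_transfer]
  refine ⟨a', SimpleGraph.Walk.cons hab' P, ?_, ?_⟩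
  · rw [SimpleGraph.Walk.cons_isCycle_iff]
    constructor
    · apply SimpleGraph.Walk.IsPath.mk'
      have hsupp : P.support = q.support.reverse ++ p.support.reverse := by
        rw [hPdef, SimpleGraph.Walk.support_append, SimpleGraph.Walk.support_reverse,
          hq'def, SimpleGraph.Walk.support_transfer]
        simp [SimpleGraph.Walk.support_reverse, hp'def,
          SimpleGraph.Walk.support_transfer]
      rw [hsupp]
      refine List.Nodup.append ?_ ?_ ?_
      · exact List.nodup_reverse.2 hq.support_nodup
      · exact List.nodup_reverse.2 hp.support_nodup
      · intro x hxq hxp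
        rw [List.mem_reverse] at hxq hxp
        exact hsep ((hpA x hxp).trans (hqB x hxq).symm)
    · intro hmem
      rw [hedges] at hmem
      rcases List.mem_append.1 hmem with h1 | h2
      · exact hwab' (hqw _ (List.mem_reverse.1 h1))
      · rcases List.mem_cons.1 h2 with h3 | h4
        · exact hne (by rw [h3, Sym2.eq_swap])
        · exact hwab' (hpw _ (List.mem_reverse.1 h4))
  · have hqs : (q.edges.reverse.map w).sum = 0 :=
      List.sum_eq_zero (by
        intro x hx
        obtain ⟨e, he, rfl⟩ := List.mem_map.1 hx
        exact hqw e (List.mem_reverse.1 he))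
    have hps : (p.edges.reverse.map w).sum = 0 :=
      List.sum_eq_zero (by
        intro x hx
        obtain ⟨e, he, rfl⟩ := List.mem_map.1 hx
        exact hpw e (List.mem_reverse.1 he))
    rw [walkWeight, SimpleGraph.Walk.edges_cons, hedges]
    simp only [List.map_cons, List.map_append, List.sum_cons, List.sum_append]
    rw [hqs, hps]
    rw [Sym2.eq_swap (a := b) (b := a)]
    ring

/-- Let `G` be a finite simple graph with nonnegative edge weights whose weight-`0` edges
form a forest. If `A ≠ B` are two connected components of that forest and `s(a, b) ≠ s(a', b')`
are two edges of `G` with `a, a' ∈ A` and `b, b' ∈ B`, then `G` contains a cycle of weight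
exactly `w(s(a, b)) + w(s(a', b'))`. -/
theorem stmt11 {V : Type*} [Fintype V] (G : SimpleGraph V) (w : Sym2 V → ℝ)
    (hw : ∀ e ∈ G.edgeSet, 0 ≤ w e)
    (hforest : (G.deleteEdges {e : Sym2 V | w e ≠ 0}).IsAcyclic)
    (A B : (G.deleteEdges {e : Sym2 V | w e ≠ 0}).ConnectedComponent) (hAB : A ≠ B)
    (a b a' b' : V) (hab : G.Adj a b) (hab' : G.Adj a' b')
    (ha : (G.deleteEdges {e : Sym2 V | w e ≠ 0}).connectedComponentMk a = A)
    (hb : (G.deleteEdges {e : Sym2 V | w e ≠ 0}).connectedComponentMk b = B)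
    (ha' : (G.deleteEdges {e : Sym2 V | w e ≠ 0}).connectedComponentMk a' = A)
    (hb' : (G.deleteEdges {e : Sym2 V | w e ≠ 0}).connectedComponentMk b' = B)
    (hne : s(a, b) ≠ s(a', b')) :
    ∃ (x : V) (C : G.Walk x x), C.IsCycle ∧
      walkWeight w C = w s(a, b) + w s(a', b') := by
  classical
  have hHedge : ∀ e ∈ (G.deleteEdges {e : Sym2 V | w e ≠ 0}).edgeSet, w e = 0 := by
    intro e he
    rw [SimpleGraph.edgeSet_deleteEdges] at he
    simpa using he.2
  have hle : G.deleteEdges {e : Sym2 V | w e ≠ 0} ≤ G := SimpleGraph.deleteEdges_le _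
  have hwab' : w s(a', b') ≠ 0 := by
    intro h0
    have hmem : s(a', b') ∈ (G.deleteEdges {e : Sym2 V | w e ≠ 0}).edgeSet := by
      rw [SimpleGraph.edgeSet_deleteEdges]
      exact ⟨hab', by simpa using h0⟩
    have hr : (G.deleteEdges {e : Sym2 V | w e ≠ 0}).Reachable a' b' :=
      ((SimpleGraph.mem_edgeSet (G := G.deleteEdges {e : Sym2 V | w e ≠ 0})).1 hmem).reachable
    exact hAB (ha' ▸ hb' ▸ SimpleGraph.ConnectedComponent.sound hr)
  have hra : (G.deleteEdges {e : Sym2 V | w e ≠ 0}).Reachable a' a :=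
    SimpleGraph.ConnectedComponent.exact (by rw [ha, ha'])
  have hrb : (G.deleteEdges {e : Sym2 V | w e ≠ 0}).Reachable b b' :=
    SimpleGraph.ConnectedComponent.exact (by rw [hb, hb'])
  have hsep : ¬ (G.deleteEdges {e : Sym2 V | w e ≠ 0}).Reachable a' b := by
    intro hr
    exact hAB (ha' ▸ hb ▸ SimpleGraph.ConnectedComponent.sound hr)
  exact stmt11_aux hle hHedge hab hab' hra hrb hsep hwab' hne
end

section
/- Let 𝓕 be a family of N ≥ 1 sets, each of size r ≥ 1, over a finite universe U with |U| = u. Then there exists a subset H ⊆ U with |H| ≤ (u/r) · ln N + 1 that intersects every member of 𝓕. -/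
private lemma stmt12_aux {α : Type*} [DecidableEq α] (U : Finset α) (r u : ℕ)
    (hr : 1 ≤ r) (hru : r ≤ u) (hu : U.card = u) :
    ∀ n : ℕ, ∀ 𝓕 : Finset (Finset α), 𝓕.card ≤ n →
      (∀ F ∈ 𝓕, F ⊆ U) → (∀ F ∈ 𝓕, F.card = r) →
      ∃ H ⊆ U, (H.card : ℝ) ≤ (u / r : ℝ) * Real.log 𝓕.card + 1 ∧
        ∀ F ∈ 𝓕, (H ∩ F).Nonempty := by
  have hu1 : 1 ≤ u := le_trans hr hru
  have hUne : U.Nonempty := Finset.card_pos.mp (by omega)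
  have hupos : (0:ℝ) < u := by exact_mod_cast hu1
  have hrpos : (0:ℝ) < r := by exact_mod_cast hr
  intro n
  induction n with
  | zero =>
    intro 𝓕 hcard _ _
    have : 𝓕 = ∅ := Finset.card_eq_zero.mp (Nat.le_zero.mp hcard)
    subst this
    refine ⟨∅, Finset.empty_subset _, ?_, by simp⟩
    simp only [Finset.card_empty, Nat.cast_zero, Real.log_zero, mul_zero, zero_add]
    norm_num
  | succ n ih =>
    intro 𝓕 hcard hsub hsize
    rcases Finset.eq_empty_or_nonempty 𝓕 with rfl | hne
    · refine ⟨∅, Finset.empty_subset _, ?_, by simp⟩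
      simp only [Finset.card_empty, Nat.cast_zero, Real.log_zero, mul_zero, zero_add]
      norm_num
    have hNpos : 0 < 𝓕.card := Finset.card_pos.mpr hne
    have hNR : (1:ℝ) ≤ 𝓕.card := by exact_mod_cast hNpos
    have hlogN : 0 ≤ Real.log 𝓕.card := Real.log_nonneg hNR
    -- double counting
    have key : ∑ x ∈ U, (𝓕.filter (fun F => x ∈ F)).card = 𝓕.card * r := by
      calc ∑ x ∈ U, (𝓕.filter (fun F => x ∈ F)).card
          = ∑ x ∈ U, ∑ F ∈ 𝓕, if x ∈ F then 1 else 0 :=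
            Finset.sum_congr rfl fun x _ => Finset.card_filter _ _
        _ = ∑ F ∈ 𝓕, ∑ x ∈ U, if x ∈ F then 1 else 0 := Finset.sum_comm
        _ = ∑ F ∈ 𝓕, (U.filter (fun x => x ∈ F)).card :=
            Finset.sum_congr rfl fun F _ => (Finset.card_filter _ _).symm
        _ = ∑ F ∈ 𝓕, F.card := by
            refine Finset.sum_congr rfl fun F hF => ?_
            rw [Finset.filter_mem_eq_inter, Finset.inter_eq_right.mpr (hsub F hF)]
        _ = 𝓕.card * r := by
            rw [Finset.sum_congr rfl hsize, Finset.sum_const, smul_eq_mul]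
    -- find a good element
    obtain ⟨x, hxU, hx⟩ : ∃ x ∈ U, 𝓕.card * r ≤ (𝓕.filter (fun F => x ∈ F)).card * u := by
      by_contra h
      push_neg at h
      have hlt := Finset.sum_lt_sum_of_nonempty hUne
        (fun x hx => h x hx)
      rw [← Finset.sum_mul, key, Finset.sum_const, hu, smul_eq_mul] at hlt
      exact absurd hlt (by rw [mul_comm]; exact lt_irrefl _)
    set d := (𝓕.filter (fun F => x ∈ F)).card with hd
    set 𝓕' := 𝓕.filter (fun F => x ∉ F) with h𝓕'
    have hsplit : d + 𝓕'.card = 𝓕.card :=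
      Finset.card_filter_add_card_filter_not (p := fun F => x ∈ F)
    have hd1 : 1 ≤ d := by
      rcases Nat.eq_zero_or_pos d with h0 | h; swap; · exact h
      rw [h0, zero_mul, Nat.le_zero] at hx
      have := Nat.mul_pos hNpos hr
      omega
    have hsub' : ∀ F ∈ 𝓕', F ⊆ U := fun F hF => hsub F (Finset.filter_subset _ _ hF)
    have hsize' : ∀ F ∈ 𝓕', F.card = r := fun F hF => hsize F (Finset.filter_subset _ _ hF)
    rcases Finset.eq_empty_or_nonempty 𝓕' with hemp | hne'
    · -- single element suffices
      refine ⟨{x}, Finset.singleton_subset_iff.mpr hxU, ?_, ?_⟩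
      · simp only [Finset.card_singleton, Nat.cast_one]
        nlinarith [mul_nonneg (le_of_lt (div_pos hupos hrpos)) hlogN]
      · intro F hF
        by_cases hxF : x ∈ F
        · exact ⟨x, Finset.mem_inter.mpr ⟨Finset.mem_singleton_self x, hxF⟩⟩
        · have : F ∈ 𝓕' := Finset.mem_filter.mpr ⟨hF, hxF⟩
          rw [hemp] at this
          simp at this
    · obtain ⟨H', hH'U, hH'card, hH'hit⟩ := ih 𝓕' (by omega) hsub' hsize'
      refine ⟨insert x H', Finset.insert_subset hxU hH'U, ?_, ?_⟩
      · -- size bound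
        have hN'pos : 0 < 𝓕'.card := Finset.card_pos.mpr hne'
        have hN'R : (0:ℝ) < 𝓕'.card := by exact_mod_cast hN'pos
        -- (N' : ℝ) * u ≤ N * (u - r)
        have hdR : ((d:ℝ)) + 𝓕'.card = 𝓕.card := by exact_mod_cast hsplit
        have hxR : (𝓕.card : ℝ) * r ≤ d * u := by exact_mod_cast hx
        have hNu : (𝓕'.card : ℝ) * u ≤ 𝓕.card * ((u:ℝ) - r) := by nlinarith
        have hrlt : (r:ℝ) < u := by nlinarith
        have h1 : (𝓕'.card : ℝ) ≤ 𝓕.card * (((u:ℝ) - r)/u) := by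
          rw [show (𝓕.card:ℝ) * (((u:ℝ) - r)/u) = 𝓕.card * ((u:ℝ) - r) / u by ring,
            le_div_iff₀ hupos]
          linarith
        have hfrac : (0:ℝ) < ((u:ℝ) - r)/u := div_pos (by linarith) hupos
        have hlog1 : Real.log 𝓕'.card ≤ Real.log (𝓕.card * (((u:ℝ) - r)/u)) := by
          apply Real.log_le_log (by positivity) h1
        have hlog2 : Real.log (𝓕.card * (((u:ℝ) - r)/u))
            = Real.log 𝓕.card + Real.log (((u:ℝ) - r)/u) := by
          rw [Real.log_mul (by positivity) (ne_of_gt hfrac)]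
        have hlog3 : Real.log (((u:ℝ) - r)/u) ≤ -(r/u) := by
          have := Real.log_le_sub_one_of_pos hfrac
          have heq : ((u:ℝ) - r)/u - 1 = -((r:ℝ)/u) := by field_simp; ring
          linarith [heq ▸ this]
        have hlog' : Real.log 𝓕'.card ≤ Real.log 𝓕.card - (r:ℝ)/u := by
          calc Real.log 𝓕'.card ≤ _ := hlog1
            _ = _ := hlog2
            _ ≤ Real.log 𝓕.card - (r:ℝ)/u := by linarith
        have hins : ((insert x H').card : ℝ) ≤ (H'.card : ℝ) + 1 := by
          exact_mod_cast Finset.card_insert_le x H'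
        have hur : ((u:ℝ)/r) * ((r:ℝ)/u) = 1 := by field_simp
        have hurpos : (0:ℝ) ≤ (u:ℝ)/r := le_of_lt (div_pos hupos hrpos)
        calc ((insert x H').card : ℝ) ≤ (H'.card : ℝ) + 1 := hins
          _ ≤ ((u:ℝ)/r) * Real.log 𝓕'.card + 2 := by linarith
          _ ≤ ((u:ℝ)/r) * (Real.log 𝓕.card - (r:ℝ)/u) + 2 := by
              have := mul_le_mul_of_nonneg_left hlog' hurpos
              linarith
          _ = ((u:ℝ)/r) * Real.log 𝓕.card + 1 := by
              rw [mul_sub, hur]; ring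
      · intro F hF
        by_cases hxF : x ∈ F
        · exact ⟨x, Finset.mem_inter.mpr ⟨Finset.mem_insert_self x H', hxF⟩⟩
        · obtain ⟨y, hy⟩ := hH'hit F (Finset.mem_filter.mpr ⟨hF, hxF⟩)
          rw [Finset.mem_inter] at hy
          exact ⟨y, Finset.mem_inter.mpr ⟨Finset.mem_insert_of_mem hy.1, hy.2⟩⟩

/-- Given a family `𝓕` of `N ≥ 1` sets, each of size `r ≥ 1`, over a finite universe `U` of
cardinality `u`, there exists a subset `H ⊆ U` of size at most `(u / r) · ln N + 1` that
intersects every member of `𝓕`. -/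
theorem stmt12 {α : Type*} [DecidableEq α] (U : Finset α) (𝓕 : Finset (Finset α))
    (N r u : ℕ) (hN : 1 ≤ N) (hNcard : 𝓕.card = N)
    (hr : 1 ≤ r) (hru : r ≤ u) (hu : U.card = u)
    (hsub : ∀ F ∈ 𝓕, F ⊆ U) (hsize : ∀ F ∈ 𝓕, F.card = r) :
    ∃ H ⊆ U, (H.card : ℝ) ≤ (u / r : ℝ) * Real.log N + 1 ∧
      ∀ F ∈ 𝓕, (H ∩ F).Nonempty := by
  obtain ⟨H, hHU, hHcard, hHhit⟩ :=
    stmt12_aux U r u hr hru hu 𝓕.card 𝓕 le_rfl hsub hsize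
  exact ⟨H, hHU, by rwa [hNcard] at hHcard, hHhit⟩
end

section
/- Let G be a connected finite simple graph on n ≥ 2 vertices with nonnegative edge weights w, and let r be an integer with 1 ≤ r ≤ n. Then there exists a nonempty set S ⊆ V with |S| ≤ (n/r) · ln n + 1 such that for every vertex v, the ball B_S(v) = { u ∈ V : dist_G(v, u) < dist_G(v, S) } has at most r elements. -/
set_option linter.unusedSectionVars false

section aux

variable {V : Type*} [Fintype V] [DecidableEq V] (G : SimpleGraph V)

lemma pathset_finite (w : Sym2 V → ℝ) (u v : V) :
    {x : ℝ | ∃ p : G.Walk u v, p.IsPath ∧ walkWeight w p = x}.Finite := by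
  classical
  have : DecidableRel G.Adj := Classical.decRel _
  have : {x : ℝ | ∃ p : G.Walk u v, p.IsPath ∧ walkWeight w p = x}
      ⊆ Set.range (fun p : G.Path u v => walkWeight w p.1) := by
    rintro x ⟨p, hp, rfl⟩
    exact ⟨⟨p, hp⟩, rfl⟩
  exact (Set.finite_range _).subset this

lemma pathset_nonempty (hG : G.Connected) (w : Sym2 V → ℝ) (u v : V) :
    {x : ℝ | ∃ p : G.Walk u v, p.IsPath ∧ walkWeight w p = x}.Nonempty := by
  obtain ⟨q⟩ := hG.preconnected u v
  refine ⟨walkWeight w (q.toPath : G.Path u v).1, (q.toPath : G.Path u v).1,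
    (q.toPath : G.Path u v).2, rfl⟩

lemma gdist_mem (hG : G.Connected) (w : Sym2 V → ℝ) (u v : V) :
    ∃ p : G.Walk u v, p.IsPath ∧ walkWeight w p = gdist G w u v :=
  (pathset_nonempty G hG w u v).csInf_mem (pathset_finite G w u v)

lemma gdist_nonneg (hG : G.Connected) (w : Sym2 V → ℝ) (hw : ∀ e ∈ G.edgeSet, 0 ≤ w e)
    (u v : V) : 0 ≤ gdist G w u v := by
  apply le_csInf (pathset_nonempty G hG w u v)
  rintro x ⟨p, hp, rfl⟩
  apply List.sum_nonneg
  intro a ha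
  obtain ⟨e, he, rfl⟩ := List.mem_map.mp ha
  exact hw e (p.edges_subset_edgeSet he)

lemma gdistS_le (w : Sym2 V → ℝ) {v s : V} {S : Set V} (hs : s ∈ S) :
    gdistS G w v S ≤ gdist G w v s := by
  have hsub : {x : ℝ | ∃ s ∈ S, gdist G w v s = x} ⊆ (gdist G w v) '' S := by
    rintro x ⟨s, hs, rfl⟩; exact ⟨s, hs, rfl⟩
  have hbdd : BddBelow {x : ℝ | ∃ s ∈ S, gdist G w v s = x} :=
    (((Set.toFinite S).image _).subset hsub).bddBelow
  exact csInf_le hbdd ⟨s, hs, rfl⟩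

/-- For each `v` there is a "radius" `t` with at least `r` vertices at distance `≤ t`
and fewer than `r` strictly closer than `t`. -/
lemma exists_radius (hG : G.Connected) (w : Sym2 V → ℝ) (r : ℕ) (hr1 : 1 ≤ r)
    (hrn : r ≤ Fintype.card V) (v : V) :
    ∃ t : ℝ, r ≤ (Finset.univ.filter (fun u => gdist G w v u ≤ t)).card ∧
      (Finset.univ.filter (fun u => gdist G w v u < t)).card < r := by
  classical
  set d := gdist G w v with hd
  have hne : (Finset.univ.image d).Nonempty := by
    simp [Finset.univ_nonempty_iff]
    have : 0 < Fintype.card V := lt_of_lt_of_le hr1 hrn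
    exact Fintype.card_pos_iff.mp this
  set C := (Finset.univ.image d).filter
      (fun t => r ≤ (Finset.univ.filter (fun u => d u ≤ t)).card) with hC
  have hCne : C.Nonempty := by
    refine ⟨(Finset.univ.image d).max' hne, Finset.mem_filter.mpr
      ⟨(Finset.univ.image d).max'_mem hne, ?_⟩⟩
    calc r ≤ Fintype.card V := hrn
      _ = Finset.univ.card := (Finset.card_univ).symm
      _ ≤ _ := by
          apply Finset.card_le_card
          intro u _
          simp only [Finset.mem_filter, Finset.mem_univ, true_and]
          exact Finset.le_max' _ _ (Finset.mem_image_of_mem d (Finset.mem_univ u))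
  refine ⟨C.min' hCne, (Finset.mem_filter.mp (C.min'_mem hCne)).2, ?_⟩
  by_contra hcon
  push_neg at hcon
  set t := C.min' hCne
  have hBne : (Finset.univ.filter (fun u => d u < t)).Nonempty :=
    Finset.card_pos.mp (lt_of_lt_of_le hr1 hcon)
  set B := (Finset.univ.filter (fun u => d u < t))
  have hBimne : (B.image d).Nonempty := hBne.image d
  set t' := (B.image d).max' hBimne
  have ht' : t' ∈ C := by
    refine Finset.mem_filter.mpr ⟨?_, ?_⟩
    · obtain ⟨u, hu, hu'⟩ := Finset.mem_image.mp ((B.image d).max'_mem hBimne)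
      have h2 : d u ∈ Finset.image d Finset.univ :=
        Finset.mem_image_of_mem d (Finset.mem_univ u)
      rwa [hu'] at h2
    · refine le_trans hcon (Finset.card_le_card ?_)
      intro u hu
      simp only [Finset.mem_filter, Finset.mem_univ, true_and]
      exact Finset.le_max' _ _ (Finset.mem_image_of_mem d hu)
  have ht'lt : t' < t := by
    obtain ⟨u, hu, hu'⟩ := Finset.mem_image.mp ((B.image d).max'_mem hBimne)
    have h2 : d u < t := (Finset.mem_filter.mp hu).2
    rwa [hu'] at h2
  exact absurd (Finset.min'_le C t' ht') (not_le.mpr ht'lt)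

/-- Greedy hitting set. -/
lemma hitting (r : ℕ) (hr1 : 1 ≤ r) (hrn : r ≤ Fintype.card V) (A : V → Finset V)
    (hA : ∀ v, r ≤ (A v).card) :
    ∀ (k : ℕ) (F : Finset V),
      ((F.card : ℝ) * (1 - (r : ℝ) / (Fintype.card V)) ^ k < 1) →
      ∃ S : Finset V, S.card ≤ k ∧ ∀ v ∈ F, ∃ s ∈ S, s ∈ A v := by
  classical
  set n := Fintype.card V with hn
  have hn0 : 0 < n := lt_of_lt_of_le hr1 hrn
  intro k
  induction k with
  | zero =>
    intro F hF
    simp only [pow_zero, mul_one] at hF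
    have : F.card = 0 := by exact_mod_cast Nat.lt_one_iff.mp (by exact_mod_cast hF)
    refine ⟨∅, le_rfl, fun v hv => absurd hv ?_⟩
    simp [Finset.card_eq_zero.mp this]
  | succ k ih =>
    intro F hF
    rcases F.eq_empty_or_nonempty with rfl | hFne
    · exact ⟨∅, by simp, by simp⟩
    -- counting: some x hits many sets
    have hsum : (r : ℕ) * F.card ≤
        ∑ x : V, (F.filter (fun v => x ∈ A v)).card := by
      have h1 : ∑ x : V, (F.filter (fun v => x ∈ A v)).card
          = ∑ v ∈ F, (A v).card := by
        simp only [Finset.card_filter]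
        rw [Finset.sum_comm]
        congr 1
        ext v
        simp [Finset.card_filter]
      rw [h1]
      calc r * F.card = ∑ _v ∈ F, r := by simp [Finset.sum_const, Nat.mul_comm]
        _ ≤ ∑ v ∈ F, (A v).card := Finset.sum_le_sum (fun v _ => hA v)
    obtain ⟨x, -, hx⟩ := Finset.exists_le_of_sum_le (Finset.univ_nonempty_iff.mpr
      (Fintype.card_pos_iff.mp hn0))
      (show ∑ _x : V, r * F.card ≤ ∑ x : V, n * (F.filter (fun v => x ∈ A v)).card by
        calc ∑ _x : V, r * F.card = n * (r * F.card) := by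
              simp [Finset.sum_const, Finset.card_univ, ← hn]
          _ ≤ n * ∑ x : V, (F.filter (fun v => x ∈ A v)).card :=
              Nat.mul_le_mul_left n hsum
          _ = ∑ x : V, n * (F.filter (fun v => x ∈ A v)).card := Finset.mul_sum _ _ _)
    set cnt := (F.filter (fun v => x ∈ A v)).card with hcnt
    set F' := F.filter (fun v => x ∉ A v) with hF'
    have hsplit : cnt + F'.card = F.card := Finset.card_filter_add_card_filter_not _
    -- real bound on F'.card
    have hq0 : (0:ℝ) ≤ 1 - (r:ℝ)/n := by
      rw [sub_nonneg, div_le_one (by positivity)]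
      exact_mod_cast hrn
    have hF'le : (F'.card : ℝ) ≤ (F.card : ℝ) * (1 - (r:ℝ)/n) := by
      have h1 : (F'.card : ℝ) = (F.card : ℝ) - cnt := by
        have := hsplit
        push_cast [← this]
        ring
      have h2 : (r:ℝ) * F.card ≤ (n:ℝ) * cnt := by exact_mod_cast hx
      have hnpos : (0:ℝ) < n := by exact_mod_cast hn0
      rw [h1, mul_sub, mul_one]
      have : (r:ℝ)/n * F.card ≤ cnt := by
        rw [div_mul_eq_mul_div, div_le_iff₀ hnpos, mul_comm ((cnt:ℝ)) _]
        linarith [h2]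
      linarith [this, mul_comm ((F.card:ℝ)) ((r:ℝ)/n)]
    have hF'cond : (F'.card : ℝ) * (1 - (r:ℝ)/n) ^ k < 1 := by
      calc (F'.card : ℝ) * (1 - (r:ℝ)/n) ^ k
          ≤ (F.card : ℝ) * (1 - (r:ℝ)/n) * (1 - (r:ℝ)/n) ^ k :=
            mul_le_mul_of_nonneg_right hF'le (pow_nonneg hq0 k)
        _ = (F.card : ℝ) * (1 - (r:ℝ)/n) ^ (k+1) := by ring
        _ < 1 := hF
    obtain ⟨S', hS'card, hS'⟩ := ih F' hF'cond
    refine ⟨insert x S', le_trans (Finset.card_insert_le _ _) (by omega), ?_⟩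
    intro v hv
    by_cases hxv : x ∈ A v
    · exact ⟨x, Finset.mem_insert_self _ _, hxv⟩
    · obtain ⟨s, hs, hs'⟩ := hS' v (Finset.mem_filter.mpr ⟨hv, hxv⟩)
      exact ⟨s, Finset.mem_insert_of_mem hs, hs'⟩

end aux

/-- Let `G` be a connected finite simple graph on `n ≥ 2` vertices with nonnegative edge
weights, and let `1 ≤ r ≤ n`. Then there exists a nonempty set `S` of at most
`(n / r) · ln n + 1` vertices such that for every vertex `v`, the open ball
`B_S(v) = { u : dist_G(v, u) < dist_G(v, S) }` has at most `r` elements. -/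
theorem stmt14 {V : Type*} [Fintype V] [DecidableEq V] (G : SimpleGraph V)
    (hG : G.Connected) (w : Sym2 V → ℝ) (hw : ∀ e ∈ G.edgeSet, 0 ≤ w e)
    (hn : 2 ≤ Fintype.card V) (r : ℕ) (hr1 : 1 ≤ r) (hrn : r ≤ Fintype.card V) :
    ∃ S : Finset V, S.Nonempty ∧
      (S.card : ℝ) ≤ ((Fintype.card V : ℝ) / r) * Real.log (Fintype.card V) + 1 ∧
      ∀ v : V, Set.ncard {u : V | gdist G w v u < gdistS G w v ↑S} ≤ r := by

  classical
  set n := Fintype.card V with hnn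
  have hn0 : 0 < n := by omega
  have hnR : (0:ℝ) < n := by exact_mod_cast hn0
  have hrR : (0:ℝ) < r := by exact_mod_cast hr1
  choose t ht1 ht2 using exists_radius G hG w r hr1 hrn
  set A : V → Finset V := fun v => Finset.univ.filter (fun u => gdist G w v u ≤ t v) with hAdef
  set x := ((n:ℝ)/r) * Real.log n with hx
  have hlogn : 0 ≤ Real.log n := Real.log_nonneg (by exact_mod_cast Nat.one_le_of_lt hn)
  have hx0 : 0 ≤ x := mul_nonneg (by positivity) hlogn
  set k := ⌊x⌋₊ + 1 with hk
  have hxk : x < (k : ℝ) := by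
    push_cast [hk]
    exact Nat.lt_floor_add_one x
  have hq0 : (0:ℝ) ≤ 1 - (r:ℝ)/n := by
    rw [sub_nonneg, div_le_one hnR]
    exact_mod_cast hrn
  have hcond : (((Finset.univ : Finset V).card : ℝ)) * (1 - (r:ℝ)/n) ^ k < 1 := by
    rw [Finset.card_univ, ← hnn]
    have h1e : 1 - (r:ℝ)/n ≤ Real.exp (-((r:ℝ)/n)) := by
      linarith [Real.add_one_le_exp (-((r:ℝ)/n))]
    calc (n:ℝ) * (1 - (r:ℝ)/n) ^ k
        ≤ (n:ℝ) * (Real.exp (-((r:ℝ)/n))) ^ k :=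
          mul_le_mul_of_nonneg_left (pow_le_pow_left₀ hq0 h1e k) hnR.le
      _ = (n:ℝ) * Real.exp ((k:ℝ) * (-((r:ℝ)/n))) := by rw [Real.exp_nat_mul]
      _ < (n:ℝ) * Real.exp (-Real.log n) := by
          apply mul_lt_mul_of_pos_left _ hnR
          apply Real.exp_lt_exp.mpr
          have hlog : Real.log n < (k:ℝ) * ((r:ℝ)/n) := by
            have : Real.log ↑n = x * ((r:ℝ)/n) := by
              rw [hx]; field_simp
            rw [this]
            exact mul_lt_mul_of_pos_right hxk (by positivity)
          linarith
      _ = 1 := by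
          rw [Real.exp_neg, Real.exp_log hnR]
          field_simp
  obtain ⟨S, hScard, hShit⟩ := hitting r hr1 hrn A (fun v => ht1 v) k Finset.univ hcond
  have hVne : Nonempty V := Fintype.card_pos_iff.mp hn0
  obtain ⟨v0⟩ := hVne
  obtain ⟨s0, hs0S, -⟩ := hShit v0 (Finset.mem_univ v0)
  refine ⟨S, ⟨s0, hs0S⟩, ?_, ?_⟩
  · calc (S.card : ℝ) ≤ (k : ℝ) := by exact_mod_cast hScard
      _ = (⌊x⌋₊ : ℝ) + 1 := by push_cast [hk]; ring
      _ ≤ x + 1 := by linarith [Nat.floor_le hx0]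
  · intro v
    obtain ⟨s, hsS, hsA⟩ := hShit v (Finset.mem_univ v)
    have hsA' : gdist G w v s ≤ t v := (Finset.mem_filter.mp hsA).2
    have hle : gdistS G w v ↑S ≤ t v :=
      le_trans (gdistS_le G w (by exact_mod_cast hsS)) hsA'
    have hsub : {u : V | gdist G w v u < gdistS G w v ↑S}
        ⊆ ↑(Finset.univ.filter (fun u => gdist G w v u < t v)) := by
      intro u hu
      simp only [Finset.coe_filter, Finset.mem_univ, Set.mem_setOf_eq, true_and]
      exact lt_of_lt_of_le hu hle
    calc Set.ncard {u : V | gdist G w v u < gdistS G w v ↑S}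
        ≤ Set.ncard ↑(Finset.univ.filter (fun u => gdist G w v u < t v)) :=
          Set.ncard_le_ncard hsub (Set.toFinite _)
      _ = (Finset.univ.filter (fun u => gdist G w v u < t v)).card :=
          Set.ncard_coe_finset _
      _ ≤ r := le_of_lt (ht2 v)
end
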